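/- For every nonnegative integer k, 4((k+1)!)^2/(π ((1/2)_{k+1})^2) = 4k + 5 + (k+1)! · ∑_{n=1}^∞ ((1/2)_n)^2/((n+1)!(k+n+1)!). -/

import Mathlib

open Real Filter Topology

noncomputable def rising (x : ℝ) (n : ℕ) : ℝ := ∏ i ∈ Finset.range n, (x + i)

lemma rising_succ (x : ℝ) (n : ℕ) : rising x (n+1) = rising x n * (x + n) :=
  Finset.prod_range_succ _ _

lemma rising_half_pos (n : ℕ) : 0 < rising (1/2) n := by
  apply Finset.prod_pos; intro i _; positivity

lemma rising_one : rising (1/2) 1 = 1/2 := by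
  simp [rising]

lemma rising_le_factorial : ∀ n : ℕ, rising (1/2) n ≤ (n.factorial : ℝ)
  | 0 => by simp [rising]
  | (n+1) => by
    rw [rising_succ, Nat.factorial_succ]
    push_cast
    have h1 := rising_le_factorial n
    have h2 := (rising_half_pos n).le
    have : (1:ℝ)/2 + n ≤ n + 1 := by linarith
    calc rising (1/2) n * (1/2 + n) ≤ (n.factorial : ℝ) * (n+1) := by
          apply mul_le_mul h1 this (by positivity) (by positivity)
      _ = (n+1) * n.factorial := by ring

lemma hasSum_telescope {g : ℕ → ℝ} {L : ℝ} (hL : Tendsto g atTop (𝓝 L))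
    (hpos : ∀ n, 0 ≤ g n - g (n+1)) :
    HasSum (fun n => g n - g (n+1)) (g 0 - L) := by
  rw [hasSum_iff_tendsto_nat_of_nonneg hpos]
  simp only [Finset.sum_range_sub']
  exact tendsto_const_nhds.sub hL

lemma wallis_rel : ∀ n : ℕ, Real.Wallis.W n * (rising (1/2) n / n.factorial)^2 * (2*(n:ℝ)+1) = 1
  | 0 => by simp [Real.Wallis.W, rising]
  | (n+1) => by
    have h := wallis_rel n
    rw [Real.Wallis.W_succ, rising_succ]
    have hf : (((n+1).factorial : ℕ) : ℝ) = ((n:ℝ)+1) * n.factorial := by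
      push_cast [Nat.factorial_succ]; ring
    have h1 : (2*(n:ℝ)+1) ≠ 0 := by positivity
    have h2 : (2*(n:ℝ)+3) ≠ 0 := by positivity
    have h3 : ((n:ℝ)+1) ≠ 0 := by positivity
    have h4 : ((n.factorial : ℕ) : ℝ) ≠ 0 := by positivity
    rw [hf]
    push_cast
    calc Real.Wallis.W n * ((2*(n:ℝ)+2)/(2*n+1) * ((2*n+2)/(2*n+3))) *
          (rising (1/2) n * (1/2+(n:ℝ)) / (((n:ℝ)+1) * n.factorial))^2 * (2*((n:ℝ)+1)+1)
        = Real.Wallis.W n * (rising (1/2) n / n.factorial)^2 * (2*(n:ℝ)+1) := by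
          field_simp
          ring
      _ = 1 := h

lemma tendsto_Winv : Tendsto (fun n : ℕ => (Real.Wallis.W (n+1))⁻¹) atTop (𝓝 (2/π)) := by
  have h := Real.Wallis.tendsto_W_nhds_pi_div_two.comp (tendsto_add_atTop_nat 1)
  have h2 := h.inv₀ (by positivity : (π/2) ≠ 0)
  simpa [Function.comp, inv_div] using h2

lemma tendsto_ratio : Tendsto (fun n : ℕ => (4*(n:ℝ)+5)/(2*(n:ℝ)+3)) atTop (𝓝 2) := by
  have h0 : Tendsto (fun n : ℕ => 2*(n:ℝ)+3) atTop atTop := by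
    apply tendsto_atTop_add_const_right
    exact Tendsto.const_mul_atTop two_pos tendsto_natCast_atTop_atTop
  have h1 : Tendsto (fun n : ℕ => (2*(n:ℝ)+3)⁻¹) atTop (𝓝 0) := tendsto_inv_atTop_zero.comp h0
  have heq : ∀ n : ℕ, (4*(n:ℝ)+5)/(2*(n:ℝ)+3) = 2 - (2*(n:ℝ)+3)⁻¹ := by
    intro n
    have h3 : (2*(n:ℝ)+3) ≠ 0 := by positivity
    field_simp
    ring
  simp_rw [heq]
  simpa using tendsto_const_nhds.sub h1

lemma base_limit : Tendsto (fun n : ℕ =>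
    (-4)*(4*(n:ℝ)+5) * (rising (1/2) (n+1) / ((n+1).factorial:ℝ))^2) atTop (𝓝 (-16/π)) := by
  have heq : ∀ n : ℕ, (-4)*(4*(n:ℝ)+5) * (rising (1/2) (n+1) / ((n+1).factorial:ℝ))^2
      = (-4) * ((4*(n:ℝ)+5)/(2*(n:ℝ)+3)) * (Real.Wallis.W (n+1))⁻¹ := by
    intro n
    have h := wallis_rel (n+1)
    push_cast at h
    have hW := Real.Wallis.W_pos (n+1)
    have h3 : (2*(n:ℝ)+3) ≠ 0 := by positivity
    have h4 : (((n+1).factorial : ℕ) : ℝ) ≠ 0 := by positivity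
    field_simp at h ⊢
    linear_combination (-1:ℝ) * h
  simp_rw [heq]
  have hv : (-16/π) = (-4 * 2) * (2/π) := by ring
  rw [hv]
  exact (tendsto_const_nhds.mul tendsto_ratio).mul tendsto_Winv

lemma fact_cast_succ (m : ℕ) : (((m+1).factorial : ℕ) : ℝ) = ((m:ℝ)+1) * (m.factorial : ℝ) := by
  rw [Nat.factorial_succ]; push_cast; ring

lemma key0 : HasSum (fun n : ℕ => (rising (1/2) (n+1))^2 / (((n+2).factorial:ℝ) * ((n+2).factorial:ℝ)))
    (16/π - 5) := by
  set g : ℕ → ℝ := fun n => (-4)*(4*(n:ℝ)+5) * (rising (1/2) (n+1) / ((n+1).factorial:ℝ))^2 with hg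
  have teleq : ∀ n : ℕ, g n - g (n+1)
      = (rising (1/2) (n+1))^2 / (((n+2).factorial:ℝ) * ((n+2).factorial:ℝ)) := by
    intro n
    have hr : rising (1/2) (n+1+1) = rising (1/2) (n+1) * (1/2 + ((n:ℝ)+1)) := by
      rw [rising_succ]; push_cast; ring_nf
    have hf : (((n+2).factorial : ℕ) : ℝ) = ((n:ℝ)+2) * ((n+1).factorial : ℝ) := by
      rw [show n+2 = (n+1)+1 from rfl, fact_cast_succ]; push_cast; ring
    have h1 : ((n+1).factorial : ℝ) ≠ 0 := by positivity
    have h2 : ((n:ℝ)+2) ≠ 0 := by positivity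
    simp only [hg]
    rw [hr, hf]
    push_cast
    field_simp
    ring
  have hpos : ∀ n : ℕ, 0 ≤ g n - g (n+1) := by
    intro n; rw [teleq n]; positivity
  have hs := hasSum_telescope base_limit hpos
  have hfun : (fun n : ℕ => g n - g (n+1))
      = fun n : ℕ => (rising (1/2) (n+1))^2 / (((n+2).factorial:ℝ) * ((n+2).factorial:ℝ)) :=
    funext teleq
  rw [hfun] at hs
  convert hs using 1
  have hg0 : g 0 = -5 := by
    simp only [hg]
    norm_num [rising_one, Nat.factorial]
  have : (-4:ℝ) * (4 * (0:ℕ) + 5) * (rising (1 / 2) (0 + 1) / ((0+1).factorial:ℝ)) ^ 2 = -5 := by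
    norm_num [rising_one, Nat.factorial]
  rw [this]
  ring

lemma step_limit (k : ℕ) : Tendsto (fun n : ℕ =>
    4 * (rising (1/2) (n+1))^2 * (((k+2).factorial:ℕ):ℝ) /
      (((n+1).factorial:ℝ) * ((k+n+2).factorial:ℝ))) atTop (𝓝 0) := by
  have hub : ∀ n : ℕ, 4 * (rising (1/2) (n+1))^2 * (((k+2).factorial:ℕ):ℝ) /
      (((n+1).factorial:ℝ) * ((k+n+2).factorial:ℝ)) ≤ 4 * (((k+2).factorial:ℕ):ℝ) / ((n:ℝ)+2) := by
    intro n
    have hden : ((n:ℝ)+2)*((n+1).factorial:ℝ) ≤ ((k+n+2).factorial:ℝ) := by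
      have h1 : ((n+2).factorial:ℕ) ≤ (k+n+2).factorial := Nat.factorial_le (by omega)
      have h2 : (((n+2).factorial:ℕ):ℝ) = ((n:ℝ)+2) * ((n+1).factorial:ℝ) := by
        rw [show n+2 = (n+1)+1 from rfl, fact_cast_succ]; push_cast; ring
      rw [← h2]; exact_mod_cast h1
    have hfp : (0:ℝ) < ((n+1).factorial:ℝ) := by positivity
    have hrle := rising_le_factorial (n+1)
    have hrpos := (rising_half_pos (n+1)).le
    calc 4 * (rising (1/2) (n+1))^2 * (((k+2).factorial:ℕ):ℝ) /
          (((n+1).factorial:ℝ) * ((k+n+2).factorial:ℝ))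
        ≤ 4 * (((n+1).factorial:ℝ))^2 * (((k+2).factorial:ℕ):ℝ) /
          (((n+1).factorial:ℝ) * (((n:ℝ)+2)*((n+1).factorial:ℝ))) := by
          gcongr
      _ = 4 * (((k+2).factorial:ℕ):ℝ) / ((n:ℝ)+2) := by
          field_simp
  have hlb : ∀ n : ℕ, 0 ≤ 4 * (rising (1/2) (n+1))^2 * (((k+2).factorial:ℕ):ℝ) /
      (((n+1).factorial:ℝ) * ((k+n+2).factorial:ℝ)) := by
    intro n; positivity
  apply squeeze_zero hlb hub
  have h0 : Tendsto (fun n : ℕ => ((n:ℝ)+2)) atTop atTop :=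
    tendsto_atTop_add_const_right _ 2 tendsto_natCast_atTop_atTop
  have h1 : Tendsto (fun n : ℕ => ((n:ℝ)+2)⁻¹) atTop (𝓝 0) := tendsto_inv_atTop_zero.comp h0
  have h2 := h1.const_mul (4 * (((k+2).factorial:ℕ):ℝ))
  simpa [div_eq_mul_inv] using h2

lemma keystep (k : ℕ) {S : ℝ}
    (IH : HasSum (fun n : ℕ => (rising (1/2) (n+1))^2 /
      (((n+2).factorial:ℝ) * ((k+n+2).factorial:ℝ))) S) :
    HasSum (fun n : ℕ => (rising (1/2) (n+1))^2 /
      (((n+2).factorial:ℝ) * ((k+n+3).factorial:ℝ)))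
      ((4*((k:ℝ)+2)^2*((k+1).factorial:ℝ) * S - 1) / ((2*(k:ℝ)+3)^2*((k+2).factorial:ℝ))) := by
  set A : ℝ := 4*((k:ℝ)+2)^2*((k+1).factorial:ℝ) with hA
  set B : ℝ := (2*(k:ℝ)+3)^2*((k+2).factorial:ℝ) with hB
  set g : ℕ → ℝ := fun n => 4 * (rising (1/2) (n+1))^2 * (((k+2).factorial:ℕ):ℝ) /
      (((n+1).factorial:ℝ) * ((k+n+2).factorial:ℝ)) with hg
  have hBne : B ≠ 0 := by positivity
  have hf2 : ∀ n : ℕ, (((n+2).factorial:ℕ):ℝ) = ((n:ℝ)+2) * ((n+1).factorial:ℝ) := by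
    intro n; rw [show n+2 = (n+1)+1 from rfl, fact_cast_succ]; push_cast; ring
  have hf3 : ∀ n : ℕ, (((k+n+3).factorial:ℕ):ℝ) = ((k:ℝ)+(n:ℝ)+3) * ((k+n+2).factorial:ℝ) := by
    intro n; rw [show k+n+3 = (k+n+2)+1 from rfl, fact_cast_succ]; push_cast; ring
  have hfk2 : (((k+2).factorial:ℕ):ℝ) = ((k:ℝ)+2) * ((k+1).factorial:ℝ) := by
    rw [show k+2 = (k+1)+1 from rfl, fact_cast_succ]; push_cast; ring
  have hr : ∀ n : ℕ, rising (1/2) (n+1+1) = rising (1/2) (n+1) * (1/2 + ((n:ℝ)+1)) := by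
    intro n; rw [rising_succ]; push_cast; ring_nf
  have hidx : ∀ n : ℕ, k+(n+1)+2 = k+n+3 := by intro n; omega
  have teleq2 : ∀ n : ℕ, g n - g (n+1) =
      (rising (1/2) (n+1))^2 * (((k+2).factorial:ℕ):ℝ) * (4*(k:ℝ)*(n:ℝ)+8*(k:ℝ)+8*(n:ℝ)+15) /
        (((n+2).factorial:ℝ) * ((k+n+3).factorial:ℝ)) := by
    intro n
    simp only [hg, hidx]
    rw [hr n, hf2 n, hf3 n]
    have e1 : ((n+1).factorial:ℝ) ≠ 0 := by positivity
    have e2 : ((k+n+2).factorial:ℝ) ≠ 0 := by positivity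
    have e3 : ((n:ℝ)+2) ≠ 0 := by positivity
    have e4 : ((k:ℝ)+(n:ℝ)+3) ≠ 0 := by positivity
    field_simp
    ring
  have hpos : ∀ n : ℕ, 0 ≤ g n - g (n+1) := by
    intro n; rw [teleq2 n]; positivity
  have hs_tele := hasSum_telescope (step_limit k) hpos
  have hne : (((k+2).factorial:ℕ):ℝ) ≠ 0 := by positivity
  have hg0 : 4 * rising (1/2) (0+1)^2 * (((k+2).factorial:ℕ):ℝ) /
      (((0+1).factorial:ℝ) * ((k+0+2).factorial:ℝ)) - 0 = 1 := by
    norm_num [rising_one, div_self hne]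
  have hs2 := ((IH.mul_left A).sub hs_tele).div_const B
  have hfun : (fun n : ℕ => (A * ((rising (1/2) (n+1))^2 /
        (((n+2).factorial:ℝ) * ((k+n+2).factorial:ℝ))) - (g n - g (n+1))) / B)
      = fun n : ℕ => (rising (1/2) (n+1))^2 /
        (((n+2).factorial:ℝ) * ((k+n+3).factorial:ℝ)) := by
    funext n
    rw [teleq2 n]
    simp only [hA, hB]
    rw [hf2 n, hf3 n, hfk2]
    have e1 : ((n+1).factorial:ℝ) ≠ 0 := by positivity
    have e2 : ((k+n+2).factorial:ℝ) ≠ 0 := by positivity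
    have e3 : ((n:ℝ)+2) ≠ 0 := by positivity
    have e4 : ((k:ℝ)+(n:ℝ)+3) ≠ 0 := by positivity
    have e5 : ((k+1).factorial:ℝ) ≠ 0 := by positivity
    have e6 : (2*(k:ℝ)+3) ≠ 0 := by positivity
    have e7 : ((k:ℝ)+2) ≠ 0 := by positivity
    field_simp
    ring
  rw [hfun, hg0] at hs2
  exact hs2

lemma key : ∀ k : ℕ, HasSum (fun n : ℕ => (rising (1/2) (n+1))^2 /
    (((n+2).factorial:ℝ) * ((k+n+2).factorial:ℝ)))
    ((4 * ((k + 1).factorial : ℝ) ^ 2 / (π * (rising (1/2) (k + 1)) ^ 2) - (4*(k:ℝ)+5)) /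
      ((k+1).factorial:ℝ))
  | 0 => by
    simp only [show ∀ n:ℕ, 0+n+2 = n+2 from fun n => by omega]
    convert key0 using 1
    rw [rising_one]
    norm_num [Nat.factorial]
    field_simp
    ring
  | (k+1) => by
    have h := keystep k (key k)
    simp only [show ∀ n:ℕ, (k+1)+n+2 = k+n+3 from fun n => by omega]
    convert h using 1
    have hR : rising (1/2) (k+1+1) = rising (1/2) (k+1) * (1/2 + ((k:ℝ)+1)) := by
      rw [rising_succ]; push_cast; ring_nf
    have hfk2 : (((k+2).factorial:ℕ):ℝ) = ((k:ℝ)+2) * ((k+1).factorial:ℝ) := by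
      rw [show k+2 = (k+1)+1 from rfl, fact_cast_succ]; push_cast; ring
    have e1 : ((k+1).factorial:ℝ) ≠ 0 := by positivity
    have e2 : rising (1/2) (k+1) ≠ 0 := (rising_half_pos (k+1)).ne'
    have e3 : (2*(k:ℝ)+3) ≠ 0 := by positivity
    have e4 : ((k:ℝ)+2) ≠ 0 := by positivity
    have e5 : π ≠ 0 := pi_ne_zero
    rw [show k+1+1 = k+2 from rfl] at hR
    push_cast
    rw [hR, hfk2]
    field_simp
    ring

theorem stmt5 (k : ℕ) :
    4 * ((k + 1).factorial : ℝ) ^ 2 / (π * (rising (1/2) (k + 1)) ^ 2) =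
    4 * k + 5 + ((k + 1).factorial : ℝ) *
      ∑' n : ℕ, (rising (1/2) (n + 1)) ^ 2 /
        ((n + 2).factorial * (k + n + 2).factorial) := by
  have h := (key k).tsum_eq
  rw [h]
  have e1 : ((k+1).factorial:ℝ) ≠ 0 := by positivity
  field_simp
  ring
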